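/- Let $A \in \mathbb{R}^{m \times n}$, let $[m] = \mathcal{P}_1 \uplus \cdots \uplus \mathcal{P}_p$ with $|\mathcal{P}_l| = m_l$, and fix targets $0 \le k_l \le m_l$. Let $S \subseteq [m]$ with $|S \cap \mathcal{P}_l| = t_l \le k_l$ for all $l$, and let $B = A - \pi_S(A)$. Then $\sum_{T} \det(A_{S \cup T} A_{S \cup T}^T) = \det(A_S A_S^T) \cdot |c''(B B^T)|$, where the sum runs over all $T \subseteq [m] \setminus S$ with $|T \cap \mathcal{P}_l| = k_l - t_l$ for all $1 \le l \le p$, and $c''(B B^T) = c_{m_1-k_1+t_1, \dots, m_p-k_p+t_p}(B B^T)$ is the indicated coefficient of the multivariate characteristic polynomial of $B B^T$. -/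

import Mathlib

/-- `res v S` is the matrix `B = v - π_S(v)`: its `i`-th row is the component of the `i`-th
row `v i` orthogonal to the span of the rows of `v` indexed by `S`. -/
noncomputable def res {m n : ℕ} (v : Fin m → EuclideanSpace ℝ (Fin n)) (S : Finset (Fin m)) :
    Fin m → EuclideanSpace ℝ (Fin n) :=
  fun i => v i - (Submodule.orthogonalProjectionOnto (Submodule.span ℝ (v '' (S : Set (Fin m)))) (v i) :
    EuclideanSpace ℝ (Fin n))

/-- `gramDet v S = det(v_S v_S^T)`: the determinant of the Gram matrix of the rows of `v`
indexed by `S`. -/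
noncomputable def gramDet {m n : ℕ} (v : Fin m → EuclideanSpace ℝ (Fin n))
    (S : Finset (Fin m)) : ℝ :=
  Matrix.det (Matrix.of fun i j : {x // x ∈ S} => (inner ℝ (v i.1) (v j.1) : ℝ))

/-- `gram v = v vᵀ`, the Gram matrix of the rows of `v`. -/
noncomputable def gram {m n : ℕ} (v : Fin m → EuclideanSpace ℝ (Fin n)) :
    Matrix (Fin m) (Fin m) ℝ :=
  Matrix.of fun i j => (inner ℝ (v i) (v j) : ℝ)

/-- The coefficient `c_{e₁,…,e_p}(M)` of the monomial `x₁^{e₁} ⋯ x_p^{e_p}` in the multivariate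
characteristic polynomial `det(M - x₁I₁ - ⋯ - x_pI_p)`, where the partition
`[m] = 𝒫₁ ⊎ ⋯ ⊎ 𝒫_p` is encoded by the labelling function `part` (so `𝒫_l = part⁻¹(l)`),
and `I_l` is the diagonal 0/1 matrix supported on `𝒫_l`. -/
noncomputable def mcharCoeff {m p : ℕ} (M : Matrix (Fin m) (Fin m) ℝ) (part : Fin m → Fin p)
    (e : Fin p → ℕ) : ℝ :=
  MvPolynomial.coeff (Finsupp.equivFunOnFinite.symm e)
    (Matrix.det (Matrix.of fun i j =>
      MvPolynomial.C (M i j) - (if i = j then MvPolynomial.X (part i) else 0)))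

noncomputable def minorDet {ι : Type*} [Fintype ι] [DecidableEq ι] {R : Type*} [CommRing R]
    (M : Matrix ι ι R) (t : Finset ι) : R :=
  Matrix.det (Matrix.of fun i j : {x // x ∈ t} => M i.1 j.1)

-- PSD det nonneg
lemma psd_det_nonneg {ι : Type*} [Fintype ι] [DecidableEq ι] {M : Matrix ι ι ℝ}
    (hM : M.PosSemidef) : 0 ≤ M.det := by
  rw [hM.isHermitian.det_eq_prod_eigenvalues]
  apply Finset.prod_nonneg
  intro i _
  simpa using hM.eigenvalues_nonneg i

lemma gramDet_nonneg {m n : ℕ} (v : Fin m → EuclideanSpace ℝ (Fin n)) (S : Finset (Fin m)) :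
    0 ≤ gramDet v S := by
  have h : (Matrix.of fun i j : {x // x ∈ S} => (inner ℝ (v i.1) (v j.1) : ℝ))
      = (Matrix.of fun (i : {x // x ∈ S}) (k : Fin n) => v i.1 k) *
        (Matrix.of fun (i : {x // x ∈ S}) (k : Fin n) => v i.1 k).conjTranspose := by
    ext i j
    simp [Matrix.mul_apply, PiLp.inner_apply, Matrix.conjTranspose_apply, mul_comm]
  exact psd_det_nonneg (h ▸ Matrix.posSemidef_self_mul_conjTranspose _)

lemma gram_transform {ι : Type*} [Fintype ι] {n : ℕ}
    (v u : ι → EuclideanSpace ℝ (Fin n)) (L : Matrix ι ι ℝ)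
    (h : ∀ a, u a = ∑ b, L a b • v b) :
    (Matrix.of fun a b => (inner ℝ (u a) (u b) : ℝ)) =
      L * (Matrix.of fun a b => (inner ℝ (v a) (v b) : ℝ)) * L.transpose := by
  ext a b
  simp only [Matrix.mul_apply, Matrix.of_apply, Matrix.transpose_apply, h,
    sum_inner, inner_sum, real_inner_smul_left, real_inner_smul_right,
    Finset.sum_mul, Finset.mul_sum]
  congr 1; ext k; congr 1; ext l; rw [real_inner_comm]; ring

lemma res_mem_orthogonal {m n : ℕ} (A : Fin m → EuclideanSpace ℝ (Fin n)) (S : Finset (Fin m))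
    (j : Fin m) : res A S j ∈ (Submodule.span ℝ (A '' (S : Set (Fin m))))ᗮ :=
  Submodule.sub_starProjection_mem_orthogonal _

lemma res_eq_zero {m n : ℕ} (A : Fin m → EuclideanSpace ℝ (Fin n)) (S : Finset (Fin m))
    {j : Fin m} (hj : j ∈ S) : res A S j = 0 := by
  unfold res
  have hmem : A j ∈ Submodule.span ℝ (A '' (S : Set (Fin m))) :=
    Submodule.subset_span (Set.mem_image_of_mem A (by simpa using hj))
  exact sub_eq_zero.2 (Submodule.starProjection_eq_self_iff.2 hmem).symm

lemma gramDet_union {m n : ℕ} (A : Fin m → EuclideanSpace ℝ (Fin n)) (S T : Finset (Fin m))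
    (hST : Disjoint S T) :
    gramDet A (S ∪ T) = gramDet A S * gramDet (res A S) T := by
  classical
  set V := Submodule.span ℝ (A '' (S : Set (Fin m))) with hV
  set B := res A S with hB
  have him : A '' (S : Set (Fin m)) = Set.range (fun j : {x // x ∈ S} => A j.1) := by
    ext y; simp
  have hmem : ∀ i : Fin m, ((V.orthogonalProjectionOnto (A i) : EuclideanSpace ℝ (Fin n))) ∈
      Submodule.span ℝ (Set.range fun j : {x // x ∈ S} => A j.1) := by
    intro i; rw [← him]; exact Submodule.coe_mem _
  choose c hc using fun i => (Submodule.mem_span_range_iff_exists_fun ℝ).mp (hmem i)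
  -- the equivalence
  let e : ({x // x ∈ S} ⊕ {x // x ∈ T}) ≃ {x // x ∈ S ∪ T} :=
    { toFun := Sum.elim (fun i => ⟨i.1, Finset.mem_union_left _ i.2⟩)
        (fun j => ⟨j.1, Finset.mem_union_right _ j.2⟩)
      invFun := fun x => if h : x.1 ∈ S then Sum.inl (⟨x.1, h⟩ : {x // x ∈ S})
        else Sum.inr (⟨x.1, (Finset.mem_union.1 x.2).resolve_left h⟩ : {x // x ∈ T})
      left_inv := by
        rintro (i | j)
        · simp
        · have : j.1 ∉ S := fun h => (Finset.disjoint_left.1 hST h) j.2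
          simp [this]
      right_inv := by
        intro x
        by_cases h : x.1 ∈ S <;> simp [h] }
  let v : ({x // x ∈ S} ⊕ {x // x ∈ T}) → EuclideanSpace ℝ (Fin n) :=
    fun a => A (Sum.elim Subtype.val Subtype.val a)
  let u : ({x // x ∈ S} ⊕ {x // x ∈ T}) → EuclideanSpace ℝ (Fin n) :=
    Sum.elim (fun i => A i.1) (fun j => B j.1)
  let L : Matrix ({x // x ∈ S} ⊕ {x // x ∈ T}) ({x // x ∈ S} ⊕ {x // x ∈ T}) ℝ :=
    Matrix.fromBlocks 1 0 (Matrix.of fun j i => -(c j.1 i)) 1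
  have hu : ∀ a, u a = ∑ b, L a b • v b := by
    rintro (i | j)
    · simp only [u, v, L, Sum.elim_inl, Fintype.sum_sum_type, Matrix.fromBlocks_apply₁₁,
        Matrix.fromBlocks_apply₁₂, Matrix.one_apply, Matrix.zero_apply, ite_smul, one_smul,
        zero_smul, Finset.sum_ite_eq, Finset.mem_univ, if_true, Finset.sum_const_zero, add_zero]
    · simp only [u, v, L, Sum.elim_inr, Fintype.sum_sum_type, Matrix.fromBlocks_apply₂₁,
        Matrix.fromBlocks_apply₂₂, Matrix.one_apply, Matrix.of_apply, ite_smul, one_smul,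
        zero_smul, Finset.sum_ite_eq, Finset.mem_univ, if_true, neg_smul]
      have hBj : B j.1 = A j.1 - ∑ x : {x // x ∈ S}, c j.1 x • A x.1 := by
        rw [hB]; unfold res; rw [hc]
      rw [hBj, Finset.sum_neg_distrib]
      abel
  have hGu : (Matrix.of fun a b => (inner ℝ (u a) (u b) : ℝ)) =
      L * (Matrix.of fun a b => (inner ℝ (v a) (v b) : ℝ)) * L.transpose := gram_transform v u L hu
  have hdetL : L.det = 1 := by
    simp [L, Matrix.det_fromBlocks_zero₁₂]
  have hdet_uv : (Matrix.of fun a b => (inner ℝ (u a) (u b) : ℝ)).det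
      = (Matrix.of fun a b => (inner ℝ (v a) (v b) : ℝ)).det := by
    rw [hGu, Matrix.det_mul, Matrix.det_mul, Matrix.det_transpose, hdetL, one_mul, mul_one]
  have h1 : gramDet A (S ∪ T) = (Matrix.of fun a b => (inner ℝ (v a) (v b) : ℝ)).det := by
    rw [gramDet, ← Matrix.det_submatrix_equiv_self e]
    congr 1
    ext a b
    cases a <;> cases b <;> rfl
  have horth : ∀ (i : Fin m), i ∈ S → ∀ (j : Fin m), (inner ℝ (A i) (B j) : ℝ) = 0 := by
    intro i hi j
    exact (Submodule.mem_orthogonal V (B j)).1 (res_mem_orthogonal A S j) (A i)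
      (Submodule.subset_span (Set.mem_image_of_mem A (by simpa using hi)))
  have h2 : (Matrix.of fun a b => (inner ℝ (u a) (u b) : ℝ)) =
      Matrix.fromBlocks (Matrix.of fun i j : {x // x ∈ S} => (inner ℝ (A i.1) (A j.1) : ℝ)) 0 0
        (Matrix.of fun i j : {x // x ∈ T} => (inner ℝ (B i.1) (B j.1) : ℝ)) := by
    ext a b
    rcases a with i | i <;> rcases b with j | j
    · rfl
    · simpa [u] using horth i.1 i.2 j.1
    · have := horth j.1 j.2 i.1
      simp only [Matrix.of_apply, Matrix.fromBlocks_apply₂₁, Matrix.zero_apply, u, Sum.elim_inr,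
        Sum.elim_inl]
      rw [real_inner_comm]
      exact this
    · rfl
  rw [h1, ← hdet_uv, h2, Matrix.det_fromBlocks_zero₁₂]
  rfl

lemma minorDet_piecewise {ι : Type*} [Fintype ι] [DecidableEq ι] {R : Type*} [CommRing R]
    (M : Matrix ι ι R) (d : ι → R) (s : Finset ι) :
    Matrix.det (Matrix.of fun i j => if i ∈ s then (if i = j then d i else 0) else M i j)
      = (∏ i ∈ s, d i) * minorDet M sᶜ := by
  classical
  rw [← Matrix.det_submatrix_equiv_self (Equiv.sumCompl (· ∈ s))]
  have : (Matrix.of fun i j => if i ∈ s then (if i = j then d i else 0) else M i j).submatrix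
      (Equiv.sumCompl (· ∈ s)) (Equiv.sumCompl (· ∈ s)) =
      Matrix.fromBlocks (Matrix.diagonal fun i : {x // x ∈ s} => d i.1) 0
        (Matrix.of fun (i : {x // ¬ x ∈ s}) (j : {x // x ∈ s}) => M i.1 j.1)
        (Matrix.of fun (i : {x // ¬ x ∈ s}) (j : {x // ¬ x ∈ s}) => M i.1 j.1) := by
    ext a b
    rcases a with i | i <;> rcases b with j | j
    · simp only [Matrix.submatrix_apply, Equiv.sumCompl_apply_inl, Matrix.of_apply, i.2,
        if_true, Matrix.fromBlocks_apply₁₁, Matrix.diagonal_apply]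
      by_cases h : i = j
      · subst h; simp
      · rw [if_neg (fun hh : i.1 = j.1 => h (Subtype.ext hh)), if_neg h]
    · simp only [Matrix.submatrix_apply, Equiv.sumCompl_apply_inl, Equiv.sumCompl_apply_inr,
        Matrix.of_apply, i.2, if_true, Matrix.fromBlocks_apply₁₂, Matrix.zero_apply]
      rw [if_neg (fun hh : i.1 = j.1 => j.2 (hh ▸ i.2))]
    · simp only [Matrix.submatrix_apply, Equiv.sumCompl_apply_inl, Equiv.sumCompl_apply_inr,
        Matrix.of_apply, Matrix.fromBlocks_apply₂₁]
      rw [if_neg i.2]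
    · simp only [Matrix.submatrix_apply, Equiv.sumCompl_apply_inr, Matrix.of_apply,
        Matrix.fromBlocks_apply₂₂]
      rw [if_neg i.2]
  rw [this, Matrix.det_fromBlocks_zero₁₂, Matrix.det_diagonal]
  congr 1
  · exact Finset.prod_coe_sort s d
  · rw [minorDet, ← Matrix.det_submatrix_equiv_self
      (Equiv.subtypeEquivRight (fun x => (Finset.mem_compl (s := s)).symm))]
    rfl

lemma det_add_diagonal {ι : Type*} [Fintype ι] [DecidableEq ι] {R : Type*} [CommRing R]
    (M : Matrix ι ι R) (d : ι → R) :
    Matrix.det (Matrix.of fun i j => M i j + (if i = j then d i else 0))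
      = ∑ U : Finset ι, (∏ i ∈ U, d i) * minorDet M Uᶜ := by
  classical
  let a : ι → ι → R := fun i j => if i = j then d i else 0
  let b : ι → ι → R := fun i j => M i j
  have key : Matrix.det (Matrix.of fun i j => M i j + (if i = j then d i else 0))
      = Matrix.detRowAlternating (a + b) := by
    congr 1
    ext i j
    simp [a, b, add_comm]
  rw [key]
  have hexp := (Matrix.detRowAlternating (R := R) (n := ι)).toMultilinearMap.map_add_univ a b
  simp only [AlternatingMap.coe_multilinearMap] at hexp
  rw [hexp]
  refine Finset.sum_congr rfl (fun U _ => ?_)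
  rw [← minorDet_piecewise M d U]
  congr 1
  ext i j
  by_cases h : i ∈ U <;> simp [Finset.piecewise, h, a, b]

lemma prod_X_eq_monomial {σ : Type*} {α : Type*} [DecidableEq α] (f : α → σ) (U : Finset α) :
    (∏ i ∈ U, (MvPolynomial.X (f i) : MvPolynomial σ ℝ))
      = MvPolynomial.monomial (∑ i ∈ U, Finsupp.single (f i) 1) 1 := by
  classical
  induction U using Finset.induction_on with
  | empty => simp
  | insert _ _ h ih =>
    rw [Finset.prod_insert h, Finset.sum_insert h, ih]
    rw [show (MvPolynomial.X (f _) : MvPolynomial σ ℝ)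
      = MvPolynomial.monomial (Finsupp.single (f _) 1) 1 from rfl, MvPolynomial.monomial_mul,
      one_mul]

lemma minorDet_map_C {ι : Type*} [Fintype ι] [DecidableEq ι] {p : ℕ}
    (M : Matrix ι ι ℝ) (t : Finset ι) :
    minorDet (M.map (MvPolynomial.C (σ := Fin p))) t = MvPolynomial.C (minorDet M t) := by
  rw [minorDet, minorDet, RingHom.map_det]
  rfl

lemma mcharCoeff_eq {m p : ℕ} (M : Matrix (Fin m) (Fin m) ℝ) (part : Fin m → Fin p)
    (e : Fin p → ℕ) :
    mcharCoeff M part e = ∑ U ∈ Finset.univ.filter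
        (fun U : Finset (Fin m) => ∀ l, (U.filter (fun x => part x = l)).card = e l),
      (-1 : ℝ) ^ U.card * minorDet M Uᶜ := by
  classical
  rw [mcharCoeff]
  have hM : (Matrix.of fun i j => MvPolynomial.C (M i j) -
        (if i = j then MvPolynomial.X (part i) else 0))
      = Matrix.of (fun i j => (M.map (MvPolynomial.C (σ := Fin p))) i j +
        (if i = j then -(MvPolynomial.X (part i)) else 0)) := by
    ext i j; by_cases h : i = j <;> simp [h, sub_eq_add_neg]
  rw [hM, det_add_diagonal, MvPolynomial.coeff_sum]
  have hterm : ∀ U : Finset (Fin m),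
      (∏ i ∈ U, -(MvPolynomial.X (part i) : MvPolynomial (Fin p) ℝ)) *
        minorDet (M.map (MvPolynomial.C (σ := Fin p))) Uᶜ
      = MvPolynomial.monomial (∑ i ∈ U, Finsupp.single (part i) 1)
          ((-1:ℝ)^U.card * minorDet M Uᶜ) := by
    intro U
    have h1 : (∏ i ∈ U, -(MvPolynomial.X (part i) : MvPolynomial (Fin p) ℝ))
        = MvPolynomial.C ((-1:ℝ)^U.card) *
          MvPolynomial.monomial (∑ i ∈ U, Finsupp.single (part i) 1) 1 := by
      rw [show (fun i => -(MvPolynomial.X (part i) : MvPolynomial (Fin p) ℝ))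
          = (fun i => (-1 : MvPolynomial (Fin p) ℝ) * MvPolynomial.X (part i)) from by
        funext i; ring]
      rw [Finset.prod_mul_distrib, Finset.prod_const, prod_X_eq_monomial]
      congr 1
      rw [map_pow, map_neg, map_one]
    rw [h1, minorDet_map_C, mul_assoc, mul_comm (MvPolynomial.monomial _ _),
      ← mul_assoc, ← map_mul, MvPolynomial.C_mul_monomial, mul_one]
  rw [Finset.sum_congr rfl (fun U _ => by rw [hterm U, MvPolynomial.coeff_monomial])]
  rw [Finset.sum_filter]
  refine Finset.sum_congr rfl (fun U _ => ?_)
  have hcond : ((∑ i ∈ U, Finsupp.single (part i) 1) = Finsupp.equivFunOnFinite.symm e)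
      ↔ (∀ l, (U.filter (fun x => part x = l)).card = e l) := by
    rw [DFunLike.ext_iff]
    apply forall_congr'
    intro l
    rw [Finsupp.finset_sum_apply]
    simp only [Finsupp.single_apply, Finsupp.coe_equivFunOnFinite_symm]
    rw [← Finset.card_filter]
  by_cases h : (∀ l, (U.filter (fun x => part x = l)).card = e l)
  · rw [if_pos h, if_pos (hcond.2 h)]
  · rw [if_neg h, if_neg (fun hh => h (hcond.1 hh))]

/-- with partition `[m] = 𝒫₁ ⊎ ⋯ ⊎ 𝒫_p` (`|𝒫_l| = m_l`), targets `k_l ≤ m_l`,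
a set `S` with `|S ∩ 𝒫_l| = t_l ≤ k_l`, and `B = A - π_S(A)`, the sum of
`det(A_{S∪T} A_{S∪T}^T)` over all `T ⊆ [m] \ S` with `|T ∩ 𝒫_l| = k_l - t_l` for all `l`
equals `det(A_S A_S^T) ⬝ |c''(B B^T)|`, where `c'' = c_{m₁-k₁+t₁, …, m_p-k_p+t_p}`. -/
theorem statement7 {m n p : ℕ} (A : Fin m → EuclideanSpace ℝ (Fin n)) (part : Fin m → Fin p)
    (mi ki ti : Fin p → ℕ)
    (hmi : ∀ l, (Finset.univ.filter (fun x => part x = l)).card = mi l)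
    (hki : ∀ l, ki l ≤ mi l)
    (S : Finset (Fin m))
    (hti : ∀ l, (S.filter (fun x => part x = l)).card = ti l)
    (htk : ∀ l, ti l ≤ ki l) :
    (∑ T ∈ Finset.univ.filter (fun T : Finset (Fin m) =>
        T ⊆ Sᶜ ∧ ∀ l, (T.filter (fun x => part x = l)).card = ki l - ti l),
        gramDet A (S ∪ T))
      = gramDet A S *
        |mcharCoeff (gram (res A S)) part (fun l => mi l - ki l + ti l)| := by
  classical
  set B := res A S with hB
  set e : Fin p → ℕ := fun l => mi l - ki l + ti l with he
  have hLHS : ∀ T ∈ Finset.univ.filter (fun T : Finset (Fin m) =>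
      T ⊆ Sᶜ ∧ ∀ l, (T.filter (fun x => part x = l)).card = ki l - ti l),
      gramDet A (S ∪ T) = gramDet A S * gramDet B T := by
    intro T hT
    obtain ⟨hsub, -⟩ := (Finset.mem_filter.1 hT).2
    exact gramDet_union A S T
      (Finset.disjoint_left.2 fun a haS haT => (Finset.mem_compl.1 (hsub haT)) haS)
  rw [Finset.sum_congr rfl hLHS, ← Finset.mul_sum]
  congr 1
  -- cardinality of fibers of complements
  have key : ∀ (U : Finset (Fin m)) (l : Fin p),
      ((Uᶜ).filter (fun x => part x = l)).card
        = mi l - (U.filter (fun x => part x = l)).card := by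
    intro U l
    have hsub : U.filter (fun x => part x = l) ⊆ Finset.univ.filter (fun x => part x = l) :=
      Finset.filter_subset_filter _ (Finset.subset_univ U)
    have hset : (Uᶜ).filter (fun x => part x = l)
        = (Finset.univ.filter (fun x => part x = l)) \ (U.filter (fun x => part x = l)) := by
      ext x
      simp only [Finset.mem_filter, Finset.mem_sdiff, Finset.mem_compl, Finset.mem_univ,
        true_and]
      tauto
    rw [hset, Finset.card_sdiff_of_subset hsub, hmi l]
  have hfil : ∀ U : Finset (Fin m), U.card = ∑ l, (U.filter (fun x => part x = l)).card :=
    fun U => Finset.card_eq_sum_card_fiberwise (fun x _ => Finset.mem_univ (part x))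
  have hmc2 : mcharCoeff (gram B) part e
      = (-1:ℝ)^(∑ l, e l) * ∑ U ∈ Finset.univ.filter
          (fun U : Finset (Fin m) => ∀ l, (U.filter (fun x => part x = l)).card = e l),
          gramDet B Uᶜ := by
    rw [mcharCoeff_eq, Finset.mul_sum]
    refine Finset.sum_congr rfl (fun U hU => ?_)
    have h := (Finset.mem_filter.1 hU).2
    have hc : U.card = ∑ l, e l := by
      rw [hfil U]; exact Finset.sum_congr rfl (fun l _ => h l)
    rw [hc]
    rfl
  have hbij : (∑ U ∈ Finset.univ.filter
        (fun U : Finset (Fin m) => ∀ l, (U.filter (fun x => part x = l)).card = e l),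
        gramDet B Uᶜ)
      = ∑ T ∈ Finset.univ.filter
        (fun T : Finset (Fin m) => ∀ l, (T.filter (fun x => part x = l)).card = ki l - ti l),
        gramDet B T := by
    refine Finset.sum_nbij' (i := fun U => Uᶜ) (j := fun T => Tᶜ) ?_ ?_ ?_ ?_ ?_
    · intro U hU
      have h := (Finset.mem_filter.1 hU).2
      refine Finset.mem_filter.2 ⟨Finset.mem_univ _, fun l => ?_⟩
      rw [key U l, h l]
      have hel : e l = mi l - ki l + ti l := rfl
      rw [hel]
      have := hki l; have := htk l
      omega
    · intro T hT
      have h := (Finset.mem_filter.1 hT).2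
      refine Finset.mem_filter.2 ⟨Finset.mem_univ _, fun l => ?_⟩
      rw [key T l, h l]
      have hel : e l = mi l - ki l + ti l := rfl
      rw [hel]
      have h1 := hki l; have h2 := htk l
      have h3 : (T.filter (fun x => part x = l)).card ≤ mi l := by
        rw [← hmi l]
        exact Finset.card_le_card (Finset.filter_subset_filter _ (Finset.subset_univ T))
      omega
    · intro U _; exact compl_compl U
    · intro T _; exact compl_compl T
    · intro U _; rfl
  have hvan : (∑ T ∈ Finset.univ.filter (fun T : Finset (Fin m) =>
        T ⊆ Sᶜ ∧ ∀ l, (T.filter (fun x => part x = l)).card = ki l - ti l),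
        gramDet B T)
      = ∑ T ∈ Finset.univ.filter
        (fun T : Finset (Fin m) => ∀ l, (T.filter (fun x => part x = l)).card = ki l - ti l),
        gramDet B T := by
    refine Finset.sum_subset ?_ ?_
    · intro T hT
      exact Finset.mem_filter.2 ⟨Finset.mem_univ _, (Finset.mem_filter.1 hT).2.2⟩
    · intro T hT hnT
      have hns : ¬ T ⊆ Sᶜ := by
        intro hss
        exact hnT (Finset.mem_filter.2 ⟨Finset.mem_univ _, hss, (Finset.mem_filter.1 hT).2⟩)
      obtain ⟨x, hxT, hxS⟩ := Finset.not_subset.1 hns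
      have hxS' : x ∈ S := by simpa using hxS
      have hBx : B x = 0 := res_eq_zero A S hxS'
      exact Matrix.det_eq_zero_of_row_eq_zero ⟨x, hxT⟩
        (fun j => by simp [hBx, Matrix.of_apply])
  rw [hvan, ← hbij]
  rw [hmc2, abs_mul, abs_pow, abs_neg, abs_one, one_pow, one_mul]
  exact (abs_of_nonneg (Finset.sum_nonneg fun U _ => gramDet_nonneg B Uᶜ)).symm
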